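/- A bounded linear operator A on a Hilbert space H is norm-attainable if and only if its adjoint A* is norm-attainable. -/

import Mathlib

open ContinuousLinearMap in
lemma aux_adjoint_attain
    {H : Type*} [NormedAddCommGroup H] [InnerProductSpace ℂ H] [CompleteSpace H]
    (A : H →L[ℂ] H) (h : ∃ x₀ : H, ‖x₀‖ = 1 ∧ ‖A x₀‖ = ‖A‖) :
    ∃ y : H, ‖y‖ = 1 ∧ ‖(adjoint A) y‖ = ‖adjoint A‖ := by
  obtain ⟨x₀, hx, hAx⟩ := h
  by_cases h0 : ‖A‖ = 0
  · refine ⟨x₀, hx, ?_⟩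
    have h1 : ‖adjoint A‖ = 0 := by
      rw [LinearIsometryEquiv.norm_map adjoint A]; exact h0
    have := ((adjoint A).le_opNorm x₀)
    rw [hx, mul_one, h1] at this
    have h2 : ‖(adjoint A) x₀‖ = 0 := le_antisymm this (norm_nonneg _)
    rw [h2, h1]
  · have hAx0 : ‖A x₀‖ ≠ 0 := by rw [hAx]; exact h0
    set y : H := (‖A x₀‖⁻¹ : ℂ) • A x₀ with hy
    have hyn : ‖y‖ = 1 := by
      rw [hy, norm_smul]
      simp [norm_inv, inv_mul_cancel₀ hAx0]
    refine ⟨y, hyn, ?_⟩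
    have hle : ‖(adjoint A) y‖ ≤ ‖adjoint A‖ := by
      have := (adjoint A).le_opNorm y
      rwa [hyn, mul_one] at this
    have hinner : inner ℂ ((adjoint A) y) x₀ = (‖A x₀‖ : ℂ) := by
      rw [ContinuousLinearMap.adjoint_inner_left, hy, inner_smul_left]
      rw [inner_self_eq_norm_sq_to_K]
      rw [map_inv₀, Complex.conj_ofReal]
      have : (‖A x₀‖ : ℂ) ≠ 0 := by exact_mod_cast hAx0
      field_simp
      rfl
    have hge : ‖adjoint A‖ ≤ ‖(adjoint A) y‖ := by
      have h1 : ‖(inner ℂ ((adjoint A) y) x₀ : ℂ)‖ ≤ ‖(adjoint A) y‖ * ‖x₀‖ :=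
        norm_inner_le_norm _ _
      rw [hinner, hx, mul_one] at h1
      simp only [Complex.norm_real, Real.norm_eq_abs, abs_of_nonneg (norm_nonneg (A x₀))] at h1
      calc ‖adjoint A‖ = ‖A‖ := LinearIsometryEquiv.norm_map adjoint A
        _ = ‖A x₀‖ := hAx.symm
        _ ≤ ‖(adjoint A) y‖ := h1
    exact le_antisymm hle hge

theorem norm_attainable_iff_adjoint_norm_attainable
    {H : Type*} [NormedAddCommGroup H] [InnerProductSpace ℂ H] [CompleteSpace H]
    (A : H →L[ℂ] H) :
    (∃ x₀ : H, ‖x₀‖ = 1 ∧ ‖A x₀‖ = ‖A‖) ↔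
    (∃ x₀ : H, ‖x₀‖ = 1 ∧ ‖(ContinuousLinearMap.adjoint A) x₀‖ = ‖ContinuousLinearMap.adjoint A‖) := by
  constructor
  · exact aux_adjoint_attain A
  · intro h
    have := aux_adjoint_attain (ContinuousLinearMap.adjoint A) h
    rwa [ContinuousLinearMap.adjoint_adjoint] at this
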